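/- For every natural number m, ∑_{j=0}^m C(2j,j)²/((j+1)·16^j) = ((2m+1)²/((m+1)·16^m))·C(2m,m)². -/

import Mathlib

open Finset

theorem central_binom_sum (m : ℕ) :
    ∑ j ∈ range (m + 1), (((2 * j).choose j : ℚ))^2 / (((j : ℚ) + 1) * 16 ^ j) =
    ((2 * (m : ℚ) + 1))^2 / (((m : ℚ) + 1) * 16 ^ m) * (((2 * m).choose m : ℚ))^2 := by
  induction m with
  | zero => norm_num
  | succ n ih =>
    rw [sum_range_succ, ih]
    have key : ((n : ℚ) + 1) * ((2 * (n + 1)).choose (n + 1) : ℚ) =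
        2 * (2 * n + 1) * ((2 * n).choose n : ℚ) := by
      have := Nat.succ_mul_centralBinom_succ n
      have h : ((n + 1) * Nat.centralBinom (n + 1) : ℚ) =
          (2 * (2 * n + 1) * Nat.centralBinom n : ℚ) := by
        exact_mod_cast congrArg (Nat.cast : ℕ → ℚ) this
      simpa [Nat.centralBinom, Nat.mul_succ, mul_comm, mul_assoc, mul_left_comm] using h

    have hc : ((2 * (n + 1)).choose (n + 1) : ℚ) =
        2 * (2 * n + 1) * ((2 * n).choose n : ℚ) / (n + 1) := by
      field_simp
      linarith [key]
    push_cast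
    rw [hc]
    have h1 : ((n : ℚ) + 1) ≠ 0 := by positivity
    have h2 : ((n : ℚ) + 2) ≠ 0 := by positivity
    have h3 : (16 : ℚ) ^ n ≠ 0 := by positivity
    field_simp
    ring
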